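/- Let X = (X_1,...,X_p), p ≥ 5, with independent components, and f(X) = (a_1 X_1 + a_2 X_2) 1_{X_5 ≤ 0} + (a_3 X_3 + a_4 X_4) 1_{X_5 > 0}. For any observation x with x_5 ≤ 0 and any S ⊆ {1,...,p}\{3,5}, the marginal contribution of X_3 when X_5 is not in the coalition equals P(X_5 > 0) · a_3 (x_3 − E[X_3]): that is, E[f(X) | X_{S∪{3}} = x_{S∪{3}}] − E[f(X) | X_S = x_S] = P(X_5 > 0) · a_3 (x_3 − E[X_3]). -/

import Mathlib

open MeasureTheory ProbabilityTheory
attribute [local instance] Classical.propDecidable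

lemma prod_ite_one' {ι : Type*} (T : Finset ι) (P : ι → Prop) :
    (∏ i ∈ T, (if P i then (1:ℝ) else 0)) = if (∀ i ∈ T, P i) then 1 else 0 := by
  by_cases h : ∀ i ∈ T, P i
  · rw [if_pos h, Finset.prod_congr rfl fun i hi => if_pos (h i hi), Finset.prod_const_one]
  · rw [if_neg h]
    push_neg at h
    obtain ⟨i, hi, hP⟩ := h
    exact Finset.prod_eq_zero hi (if_neg hP)

lemma meas_ind_eq' {α : Type*} [MeasurableSpace α] {f : α → ℝ} (hf : Measurable f) (c : ℝ) :
    Measurable (fun a => if f a = c then (1:ℝ) else 0) := by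
  have h : MeasurableSet {a | f a = c} := hf (measurableSet_singleton c)
  exact Measurable.ite h measurable_const measurable_const

lemma meas_ind_lt' {α : Type*} [MeasurableSpace α] {f : α → ℝ} (hf : Measurable f) :
    Measurable (fun a => if 0 < f a then (1:ℝ) else 0) := by
  have h : MeasurableSet {a | 0 < f a} := measurableSet_lt measurable_const hf
  exact Measurable.ite h measurable_const measurable_const

lemma meas_ind_le' {α : Type*} [MeasurableSpace α] {f : α → ℝ} (hf : Measurable f) :
    Measurable (fun a => if f a ≤ 0 then (1:ℝ) else 0) := by
  have h : MeasurableSet {a | f a ≤ 0} := measurableSet_le hf measurable_const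
  exact Measurable.ite h measurable_const measurable_const

lemma integrable_mul_bdd' {α : Type*} [MeasurableSpace α] {μ : Measure α} {F b : α → ℝ}
    (hF : Integrable F μ) (hb : Measurable b) (hbd : ∀ x, ‖b x‖ ≤ 1) :
    Integrable (fun x => F x * b x) μ := by
  have := Integrable.bdd_mul (c := 1) hF hb.aestronglyMeasurable (Filter.Eventually.of_forall hbd)
  simpa [mul_comm] using this

theorem aux_marginal {Ω : Type*} [MeasurableSpace Ω] (μ : Measure Ω) [IsProbabilityMeasure μ]
    {p : ℕ} (X : Fin p → Ω → ℝ) (hXm : ∀ i, Measurable (X i))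
    (hindep : ProbabilityTheory.iIndepFun X μ)
    (hint : ∀ i, Integrable (X i) μ)
    (a₁ a₂ a₃ a₄ : ℝ) (x : Fin p → ℝ)
    (i0 i1 i2 i3 i4 : Fin p)
    (h02 : i0 ≠ i2) (h12 : i1 ≠ i2) (h32 : i3 ≠ i2) (h42 : i4 ≠ i2)
    (S : Finset (Fin p)) (h2S : i2 ∉ S) (h4S : i4 ∉ S)
    (hpos : μ {ω | ∀ i ∈ S ∪ {i2}, X i ω = x i} ≠ 0)
    (hposS : μ {ω | ∀ i ∈ S, X i ω = x i} ≠ 0) :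
    (∫ ω, ((a₁ * X i0 ω + a₂ * X i1 ω) * (if X i4 ω ≤ 0 then (1:ℝ) else 0) +
        (a₃ * X i2 ω + a₄ * X i3 ω) * (if 0 < X i4 ω then (1:ℝ) else 0))
        ∂(ProbabilityTheory.cond μ {ω | ∀ i ∈ S ∪ {i2}, X i ω = x i})) -
      (∫ ω, ((a₁ * X i0 ω + a₂ * X i1 ω) * (if X i4 ω ≤ 0 then (1:ℝ) else 0) +
        (a₃ * X i2 ω + a₄ * X i3 ω) * (if 0 < X i4 ω then (1:ℝ) else 0))
        ∂(ProbabilityTheory.cond μ {ω | ∀ i ∈ S, X i ω = x i})) =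
    (μ {ω | 0 < X i4 ω}).toReal * (a₃ * (x i2 - ∫ ω, X i2 ω ∂μ)) := by
  classical
  set A : Set Ω := {ω | ∀ i ∈ S ∪ {i2}, X i ω = x i} with hAdef
  set B : Set Ω := {ω | ∀ i ∈ S, X i ω = x i} with hBdef
  set F : Ω → ℝ := fun ω => ((a₁ * X i0 ω + a₂ * X i1 ω) * (if X i4 ω ≤ 0 then (1:ℝ) else 0) +
      (a₃ * X i2 ω + a₄ * X i3 ω) * (if 0 < X i4 ω then (1:ℝ) else 0)) with hFdef
  set u : Ω → ℝ := fun ω => ∏ i ∈ S, (if X i ω = x i then (1:ℝ) else 0) with hudef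
  set v : Ω → ℝ := fun ω => if X i2 ω = x i2 then (1:ℝ) else 0 with hvdef
  set w : Ω → ℝ := fun ω => if 0 < X i4 ω then (1:ℝ) else 0 with hwdef
  set wl : Ω → ℝ := fun ω => if X i4 ω ≤ 0 then (1:ℝ) else 0 with hwldef
  set g : Ω → ℝ := fun ω => (a₁ * X i0 ω + a₂ * X i1 ω) * wl ω + a₄ * X i3 ω * w ω with hgdef
  -- measurability
  have hmu : Measurable u := Finset.measurable_prod _ fun i _ => meas_ind_eq' (hXm i) (x i)
  have hmv : Measurable v := meas_ind_eq' (hXm i2) (x i2)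
  have hmw : Measurable w := meas_ind_lt' (hXm i4)
  have hmwl : Measurable wl := meas_ind_le' (hXm i4)
  have hmg : Measurable g := (((measurable_const.mul (hXm i0)).add
      (measurable_const.mul (hXm i1))).mul hmwl).add ((measurable_const.mul (hXm i3)).mul hmw)
  have hA : MeasurableSet A := by
    have : A = ⋂ i ∈ ((S ∪ {i2} : Finset (Fin p)) : Set (Fin p)), (X i) ⁻¹' {x i} := by
      ext ω
      simp only [hAdef, Set.mem_setOf_eq, Set.mem_iInter, Set.mem_preimage,
        Set.mem_singleton_iff, Finset.mem_coe]
    rw [this]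
    exact MeasurableSet.biInter (Set.to_countable _) fun i _ => hXm i (measurableSet_singleton _)
  have hB : MeasurableSet B := by
    have : B = ⋂ i ∈ (S : Set (Fin p)), (X i) ⁻¹' {x i} := by
      ext ω
      simp only [hBdef, Set.mem_setOf_eq, Set.mem_iInter, Set.mem_preimage,
        Set.mem_singleton_iff, Finset.mem_coe]
    rw [this]
    exact MeasurableSet.biInter (Set.to_countable _) fun i _ => hXm i (measurableSet_singleton _)
  -- indicator identities
  have hBind : ∀ ω, B.indicator (fun _ => (1:ℝ)) ω = u ω := by
    intro ω
    rw [Set.indicator_apply, hudef]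
    simp only [prod_ite_one' S (fun i => X i ω = x i)]
    by_cases h : ∀ i ∈ S, X i ω = x i
    · rw [if_pos h, if_pos (show ω ∈ B from h)]
    · rw [if_neg h, if_neg (show ω ∉ B from h)]
  have hAind : ∀ ω, A.indicator (fun _ => (1:ℝ)) ω = u ω * v ω := by
    intro ω
    rw [Set.indicator_apply, hudef, hvdef]
    simp only [prod_ite_one' S (fun i => X i ω = x i)]
    by_cases h1 : ∀ i ∈ S, X i ω = x i
    · by_cases h2 : X i2 ω = x i2
      · have hmem : ω ∈ A := by
          intro i hi
          rcases Finset.mem_union.mp hi with hi | hi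
          · exact h1 i hi
          · rw [Finset.mem_singleton.mp hi]; exact h2
        rw [if_pos hmem, if_pos h1, if_pos h2, one_mul]
      · have hmem : ω ∉ A := fun h => h2 (h i2 (Finset.mem_union_right _ (Finset.mem_singleton_self i2)))
        rw [if_neg hmem, if_pos h1, if_neg h2, one_mul]
    · have hmem : ω ∉ A := fun h => h1 fun i hi => h i (Finset.mem_union_left _ hi)
      rw [if_neg hmem, if_neg h1, zero_mul]
  -- conditional integral formula
  have hcond : ∀ (s : Set Ω), MeasurableSet s →
      ∫ ω, F ω ∂(ProbabilityTheory.cond μ s) = (μ s).toReal⁻¹ * ∫ ω, s.indicator F ω ∂μ := by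
    intro s hs
    rw [ProbabilityTheory.cond, integral_smul_measure, integral_indicator hs, ENNReal.toReal_inv,
      smul_eq_mul]
  -- independence helper
  have key : ∀ (T U : Finset (Fin p)), Disjoint T U → ∀ (φ : (↥T → ℝ) → ℝ)
      (ψ : (↥U → ℝ) → ℝ), Measurable φ → Measurable ψ →
      IndepFun (fun ω => φ fun i : ↥T => X i.1 ω) (fun ω => ψ fun i : ↥U => X i.1 ω) μ :=
    fun T U hTU φ ψ hφ hψ => (hindep.indepFun_finset T U hTU hXm).comp hφ hψ
  -- T' = coords of g*u
  set T' : Finset (Fin p) := insert i0 (insert i1 (insert i3 (insert i4 S))) with hT'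
  have hST' : S ⊆ T' := fun i hi => by simp [hT', hi]
  have h0T : i0 ∈ T' := by simp [hT']
  have h1T : i1 ∈ T' := by simp [hT']
  have h3T : i3 ∈ T' := by simp [hT']
  have h4T : i4 ∈ T' := by simp [hT']
  have h2T : i2 ∉ T' := by
    simp only [hT', Finset.mem_insert]
    push_neg
    exact ⟨fun h => h02 h.symm, fun h => h12 h.symm, fun h => h32 h.symm,
      fun h => h42 h.symm, h2S⟩
  -- I1 : IndepFun (g*u) v
  have I1 : IndepFun (fun ω => g ω * u ω) v μ := by
    have hd : Disjoint T' ({i2} : Finset (Fin p)) := by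
      rw [Finset.disjoint_singleton_right]; exact h2T
    have h := key T' {i2} hd
      (fun y => ((a₁ * y ⟨i0, h0T⟩ + a₂ * y ⟨i1, h1T⟩) * (if y ⟨i4, h4T⟩ ≤ 0 then (1:ℝ) else 0) +
          a₄ * y ⟨i3, h3T⟩ * (if 0 < y ⟨i4, h4T⟩ then (1:ℝ) else 0)) *
        ∏ i ∈ S.attach, (if y ⟨i.1, hST' i.2⟩ = x i.1 then (1:ℝ) else 0))
      (fun y => if y ⟨i2, Finset.mem_singleton_self i2⟩ = x i2 then (1:ℝ) else 0)
      (by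
        apply Measurable.mul
        · exact ((((measurable_const.mul (measurable_pi_apply (⟨i0, h0T⟩ : ↥T'))).add
            (measurable_const.mul (measurable_pi_apply (⟨i1, h1T⟩ : ↥T')))).mul
            (meas_ind_le' (measurable_pi_apply (⟨i4, h4T⟩ : ↥T')))).add
            ((measurable_const.mul (measurable_pi_apply (⟨i3, h3T⟩ : ↥T'))).mul
            (meas_ind_lt' (measurable_pi_apply (⟨i4, h4T⟩ : ↥T')))))
        · exact Finset.measurable_prod _ fun i _ => meas_ind_eq' (measurable_pi_apply _) _)
      (meas_ind_eq' (measurable_pi_apply _) _)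
    have e1 : (fun ω => g ω * u ω) = fun ω =>
        ((a₁ * X i0 ω + a₂ * X i1 ω) * (if X i4 ω ≤ 0 then (1:ℝ) else 0) +
          a₄ * X i3 ω * (if 0 < X i4 ω then (1:ℝ) else 0)) *
        ∏ i ∈ S.attach, (if X i.1 ω = x i.1 then (1:ℝ) else 0) := by
      funext ω
      rw [hgdef, hudef, hwdef, hwldef,
        Finset.prod_attach S (fun i => if X i ω = x i then (1:ℝ) else 0)]
    rw [e1, hvdef]
    exact h
  -- I2 : IndepFun w (u*v)
  have I2 : IndepFun w (fun ω => u ω * v ω) μ := by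
    have hd : Disjoint ({i4} : Finset (Fin p)) (insert i2 S) := by
      rw [Finset.disjoint_singleton_left, Finset.mem_insert]
      push_neg
      exact ⟨h42, h4S⟩
    have h := key {i4} (insert i2 S) hd
      (fun y => if 0 < y ⟨i4, Finset.mem_singleton_self i4⟩ then (1:ℝ) else 0)
      (fun y => (∏ i ∈ S.attach, (if y ⟨i.1, Finset.mem_insert_of_mem i.2⟩ = x i.1 then (1:ℝ) else 0)) *
        (if y ⟨i2, Finset.mem_insert_self i2 S⟩ = x i2 then (1:ℝ) else 0))
      (meas_ind_lt' (measurable_pi_apply _))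
      ((Finset.measurable_prod _ fun i _ => meas_ind_eq' (measurable_pi_apply _) _).mul
        (meas_ind_eq' (measurable_pi_apply _) _))
    have e1 : (fun ω => u ω * v ω) = fun ω =>
        (∏ i ∈ S.attach, (if X i.1 ω = x i.1 then (1:ℝ) else 0)) *
        (if X i2 ω = x i2 then (1:ℝ) else 0) := by
      funext ω
      rw [hudef, hvdef, Finset.prod_attach S (fun i => if X i ω = x i then (1:ℝ) else 0)]
    rw [e1, hwdef]
    exact h
  -- I3 : IndepFun u v
  have I3 : IndepFun u v μ := by
    have hd : Disjoint S ({i2} : Finset (Fin p)) := by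
      rw [Finset.disjoint_singleton_right]; exact h2S
    have h := key S {i2} hd
      (fun y => ∏ i ∈ S.attach, (if y ⟨i.1, i.2⟩ = x i.1 then (1:ℝ) else 0))
      (fun y => if y ⟨i2, Finset.mem_singleton_self i2⟩ = x i2 then (1:ℝ) else 0)
      (Finset.measurable_prod _ fun i _ => meas_ind_eq' (measurable_pi_apply _) _)
      (meas_ind_eq' (measurable_pi_apply _) _)
    have e1 : u = fun ω => ∏ i ∈ S.attach, (if X i.1 ω = x i.1 then (1:ℝ) else 0) := by
      funext ω
      rw [hudef, Finset.prod_attach S (fun i => if X i ω = x i then (1:ℝ) else 0)]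
    rw [e1, hvdef]
    exact h
  -- I4 : IndepFun (X i2 * w) u
  have I4 : IndepFun (fun ω => X i2 ω * w ω) u μ := by
    have hd : Disjoint (insert i2 ({i4} : Finset (Fin p))) S := by
      rw [Finset.disjoint_left]
      intro a ha
      rcases Finset.mem_insert.mp ha with h | h
      · rw [h]; exact h2S
      · rw [Finset.mem_singleton.mp h]; exact h4S
    have h := key (insert i2 {i4}) S hd
      (fun y => y ⟨i2, Finset.mem_insert_self i2 _⟩ *
        (if 0 < y ⟨i4, Finset.mem_insert_of_mem (Finset.mem_singleton_self i4)⟩ then (1:ℝ) else 0))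
      (fun y => ∏ i ∈ S.attach, (if y ⟨i.1, i.2⟩ = x i.1 then (1:ℝ) else 0))
      ((measurable_pi_apply _).mul (meas_ind_lt' (measurable_pi_apply _)))
      (Finset.measurable_prod _ fun i _ => meas_ind_eq' (measurable_pi_apply _) _)
    have e1 : u = fun ω => ∏ i ∈ S.attach, (if X i.1 ω = x i.1 then (1:ℝ) else 0) := by
      funext ω
      rw [hudef, Finset.prod_attach S (fun i => if X i ω = x i then (1:ℝ) else 0)]
    rw [e1, hwdef]
    exact h
  -- I5 : IndepFun (X i2) w
  have I5 : IndepFun (X i2) w μ := by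
    have h := (hindep.indepFun (Ne.symm h42)).comp measurable_id (meas_ind_lt' measurable_id)
    rw [hwdef]
    exact h
  -- integral abbreviations
  set K := ∫ ω, g ω * u ω ∂μ with hK
  set c := ∫ ω, v ω ∂μ with hc
  set q := ∫ ω, w ω ∂μ with hq
  set mB := ∫ ω, u ω ∂μ with hmB
  set m2 := ∫ ω, X i2 ω ∂μ with hm2
  -- basic integral identities
  have huB : mB = (μ B).toReal := by
    rw [hmB, show (fun ω => u ω) = B.indicator (fun _ => (1:ℝ)) from funext fun ω => (hBind ω).symm]
    exact integral_indicator_one hB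
  have hqI : q = (μ {ω | 0 < X i4 ω}).toReal := by
    have hms : MeasurableSet {ω | 0 < X i4 ω} := measurableSet_lt measurable_const (hXm i4)
    rw [hq, show (fun ω => w ω) = Set.indicator {ω | 0 < X i4 ω} (fun _ => (1:ℝ)) from ?_]
    · exact integral_indicator_one hms
    · funext ω
      by_cases h : 0 < X i4 ω <;>
        simp [hwdef, Set.indicator_apply, Set.mem_setOf_eq, h]
  have huvA : ∫ ω, u ω * v ω ∂μ = (μ A).toReal := by
    rw [show (fun ω => u ω * v ω) = A.indicator (fun _ => (1:ℝ)) from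
      funext fun ω => (hAind ω).symm]
    exact integral_indicator_one hA
  have huvc : ∫ ω, u ω * v ω ∂μ = mB * c :=
    I3.integral_fun_mul_eq_mul_integral hmu.aestronglyMeasurable hmv.aestronglyMeasurable
  have hmuA : (μ A).toReal = mB * c := by rw [← huvA, huvc]
  -- nonvanishing
  have hmBne : mB ≠ 0 := by
    rw [huB]
    exact ENNReal.toReal_ne_zero.mpr ⟨hposS, measure_ne_top μ B⟩
  have hmAne : (μ A).toReal ≠ 0 := ENNReal.toReal_ne_zero.mpr ⟨hpos, measure_ne_top μ A⟩
  have hcne : c ≠ 0 := by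
    intro h
    rw [hmuA, h, mul_zero] at hmAne
    exact hmAne rfl
  -- pointwise identities
  have hv2 : ∀ ω, X i2 ω * v ω = x i2 * v ω := by
    intro ω
    simp only [hvdef]
    by_cases h : X i2 ω = x i2
    · rw [if_pos h, h]
    · rw [if_neg h, mul_zero, mul_zero]
  -- integrability
  have hG1int : Integrable (fun ω => a₁ * X i0 ω + a₂ * X i1 ω) μ :=
    ((hint i0).const_mul a₁).add ((hint i1).const_mul a₂)
  have hwbd : ∀ ω, ‖w ω‖ ≤ 1 := by
    intro ω; rw [hwdef]; dsimp only; split <;> simp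
  have hwlbd : ∀ ω, ‖wl ω‖ ≤ 1 := by
    intro ω; rw [hwldef]; dsimp only; split <;> simp
  have hubd : ∀ ω, ‖u ω‖ ≤ 1 := by
    intro ω
    rw [hudef]
    dsimp only
    rw [prod_ite_one' S (fun i => X i ω = x i)]
    split <;> simp
  have hvbd : ∀ ω, ‖v ω‖ ≤ 1 := by
    intro ω; rw [hvdef]; dsimp only; split <;> simp
  have hgint : Integrable g μ := by
    rw [hgdef]
    exact (integrable_mul_bdd' hG1int hmwl hwlbd).add
      (integrable_mul_bdd' ((hint i3).const_mul a₄) hmw hwbd)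
  have hguint : Integrable (fun ω => g ω * u ω) μ := integrable_mul_bdd' hgint hmu hubd
  have hguvint : Integrable (fun ω => g ω * u ω * v ω) μ :=
    integrable_mul_bdd' hguint hmv hvbd
  have hwuvint : Integrable (fun ω => w ω * (u ω * v ω)) μ := by
    have : Integrable (fun ω => w ω) μ := by
      have := (integrable_const (1:ℝ) (μ := μ))
      exact this.mono' hmw.aestronglyMeasurable (Filter.Eventually.of_forall (by simpa using hwbd))
    exact integrable_mul_bdd' this (hmu.mul hmv) fun ω => by
      calc ‖u ω * v ω‖ = ‖u ω‖ * ‖v ω‖ := norm_mul _ _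
        _ ≤ 1 * 1 := mul_le_mul (hubd ω) (hvbd ω) (norm_nonneg _) zero_le_one
        _ = 1 := mul_one 1
  have hwuint : Integrable (fun ω => X i2 ω * w ω * u ω) μ :=
    integrable_mul_bdd' (integrable_mul_bdd' (hint i2) hmw hwbd) hmu hubd
  -- main computation for A
  have hFA : ∫ ω, A.indicator F ω ∂μ = K * c + a₃ * x i2 * (q * (mB * c)) := by
    have hpt : ∀ ω, A.indicator F ω =
        g ω * u ω * v ω + (a₃ * x i2) * (w ω * (u ω * v ω)) := by
      intro ω
      have h1 : A.indicator F ω = F ω * (u ω * v ω) := by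
        have h2 := hAind ω
        by_cases h : ω ∈ A
        · simp only [Set.indicator_of_mem h] at h2 ⊢
          rw [← h2, mul_one]
        · simp only [Set.indicator_of_notMem h] at h2 ⊢
          rw [← h2, mul_zero]
      rw [h1]
      simp only [hFdef, hgdef, hwdef, hwldef]
      have h2 := hv2 ω
      linear_combination (a₃ * (if 0 < X i4 ω then (1:ℝ) else 0) * u ω) * h2
    rw [show (fun ω => A.indicator F ω) = fun ω =>
        g ω * u ω * v ω + (a₃ * x i2) * (w ω * (u ω * v ω)) from funext hpt]
    rw [integral_add hguvint (hwuvint.const_mul _), integral_const_mul _ _]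
    have e1 : ∫ ω, g ω * u ω * v ω ∂μ = K * c :=
      I1.integral_fun_mul_eq_mul_integral (hmg.mul hmu).aestronglyMeasurable hmv.aestronglyMeasurable
    have e2 : ∫ ω, w ω * (u ω * v ω) ∂μ = q * (mB * c) := by
      have h : ∫ ω, w ω * (u ω * v ω) ∂μ = q * ∫ ω, u ω * v ω ∂μ :=
        I2.integral_fun_mul_eq_mul_integral hmw.aestronglyMeasurable (hmu.mul hmv).aestronglyMeasurable
      rw [h, huvc]
    rw [e1, e2]
  -- main computation for B
  have hFB : ∫ ω, B.indicator F ω ∂μ = K + a₃ * (m2 * q * mB) := by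
    have hpt : ∀ ω, B.indicator F ω = g ω * u ω + a₃ * (X i2 ω * w ω * u ω) := by
      intro ω
      have h1 : B.indicator F ω = F ω * u ω := by
        have h2 := hBind ω
        by_cases h : ω ∈ B
        · simp only [Set.indicator_of_mem h] at h2 ⊢
          rw [← h2, mul_one]
        · simp only [Set.indicator_of_notMem h] at h2 ⊢
          rw [← h2, mul_zero]
      rw [h1]
      simp only [hFdef, hgdef, hwdef, hwldef]
      ring
    rw [show (fun ω => B.indicator F ω) = fun ω =>
        g ω * u ω + a₃ * (X i2 ω * w ω * u ω) from funext hpt]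
    rw [integral_add hguint (hwuint.const_mul _), integral_const_mul _ _]
    have e1 : ∫ ω, X i2 ω * w ω * u ω ∂μ = m2 * q * mB := by
      have h : ∫ ω, X i2 ω * w ω * u ω ∂μ = (∫ ω, X i2 ω * w ω ∂μ) * mB :=
        I4.integral_fun_mul_eq_mul_integral ((hXm i2).mul hmw).aestronglyMeasurable hmu.aestronglyMeasurable
      have h0 : ∫ ω, X i2 ω * w ω ∂μ = m2 * q :=
        I5.integral_fun_mul_eq_mul_integral (hXm i2).aestronglyMeasurable hmw.aestronglyMeasurable
      rw [h, h0]
    rw [e1]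
  -- put together
  rw [hcond A hA, hcond B hB, hFA, hFB, hmuA, ← huB, ← hqI]
  field_simp
  ring

/-- For `f(X) = (a₁X₁+a₂X₂)1_{X₅≤0} + (a₃X₃+a₄X₄)1_{X₅>0}` with independent
components and `x₅ ≤ 0`, the marginal contribution of `X₃` to a coalition `S`
not containing `X₅` equals `P(X₅ > 0)·a₃(x₃ − E[X₃])`.
(Indices `0,…,4` stand for `X₁,…,X₅`.) -/
theorem marginal_contribution_without_X5
    {Ω : Type*} [MeasurableSpace Ω] (μ : Measure Ω) [IsProbabilityMeasure μ]
    (p : ℕ) (hp : 5 ≤ p) (X : Fin p → Ω → ℝ) (hXm : ∀ i, Measurable (X i))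
    (hindep : ProbabilityTheory.iIndepFun X μ)
    (hint : ∀ i, Integrable (X i) μ)
    (a₁ a₂ a₃ a₄ : ℝ) (x : Fin p → ℝ)
    (hx5 : x ⟨4, by omega⟩ ≤ 0)
    (S : Finset (Fin p))
    (hS : S ⊆ Finset.univ \ {⟨2, by omega⟩, ⟨4, by omega⟩})
    (hpos : μ {ω | ∀ i ∈ S ∪ {(⟨2, by omega⟩ : Fin p)}, X i ω = x i} ≠ 0)
    (hposS : μ {ω | ∀ i ∈ S, X i ω = x i} ≠ 0) :
    (∫ ω, ((a₁ * X ⟨0, by omega⟩ ω + a₂ * X ⟨1, by omega⟩ ω) *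
          (if X ⟨4, by omega⟩ ω ≤ 0 then (1 : ℝ) else 0) +
        (a₃ * X ⟨2, by omega⟩ ω + a₄ * X ⟨3, by omega⟩ ω) *
          (if 0 < X ⟨4, by omega⟩ ω then (1 : ℝ) else 0))
        ∂(ProbabilityTheory.cond μ
          {ω | ∀ i ∈ S ∪ {(⟨2, by omega⟩ : Fin p)}, X i ω = x i})) -
      (∫ ω, ((a₁ * X ⟨0, by omega⟩ ω + a₂ * X ⟨1, by omega⟩ ω) *
          (if X ⟨4, by omega⟩ ω ≤ 0 then (1 : ℝ) else 0) +
        (a₃ * X ⟨2, by omega⟩ ω + a₄ * X ⟨3, by omega⟩ ω) *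
          (if 0 < X ⟨4, by omega⟩ ω then (1 : ℝ) else 0))
        ∂(ProbabilityTheory.cond μ {ω | ∀ i ∈ S, X i ω = x i})) =
    (μ {ω | 0 < X ⟨4, by omega⟩ ω}).toReal *
      (a₃ * (x ⟨2, by omega⟩ - ∫ ω, X ⟨2, by omega⟩ ω ∂μ)) := by
  have h2S : (⟨2, by omega⟩ : Fin p) ∉ S := by
    intro h
    have := hS h
    rw [Finset.mem_sdiff] at this
    exact this.2 (by simp)
  have h4S : (⟨4, by omega⟩ : Fin p) ∉ S := by
    intro h
    have := hS h
    rw [Finset.mem_sdiff] at this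
    exact this.2 (by simp)
  exact aux_marginal μ X hXm hindep hint a₁ a₂ a₃ a₄ x
    ⟨0, by omega⟩ ⟨1, by omega⟩ ⟨2, by omega⟩ ⟨3, by omega⟩ ⟨4, by omega⟩
    (by simp [Fin.ext_iff]) (by simp [Fin.ext_iff]) (by simp [Fin.ext_iff])
    (by simp [Fin.ext_iff]) S h2S h4S hpos hposS
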